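/- For every real θ ∈ [0, π/2] and every positive integer p, arccos((cos θ)^p) ≤ √p · θ. -/

import Mathlib

open Real Set

private lemma geom_aux {x : ℝ} (hx0 : 0 ≤ x) (hx1 : x ≤ 1) (n : ℕ) :
    (n : ℝ) * x ^ (n - 1) * (1 - x) ≤ 1 - x ^ n := by
  have hsum : 1 - x ^ n = (1 - x) * ∑ i ∈ Finset.range n, x ^ i := by
    have := geom_sum_mul x n
    nlinarith [this]
  have hbound : (n : ℝ) * x ^ (n - 1) ≤ ∑ i ∈ Finset.range n, x ^ i := by
    calc (n : ℝ) * x ^ (n - 1) = ∑ _i ∈ Finset.range n, x ^ (n - 1) := by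
          rw [Finset.sum_const, Finset.card_range, nsmul_eq_mul]
      _ ≤ ∑ i ∈ Finset.range n, x ^ i := by
          apply Finset.sum_le_sum
          intro i hi
          exact pow_le_pow_of_le_one hx0 hx1 (Nat.le_sub_one_of_lt (Finset.mem_range.mp hi))
  have h1x : 0 ≤ 1 - x := by linarith
  calc (n : ℝ) * x ^ (n - 1) * (1 - x) ≤ (∑ i ∈ Finset.range n, x ^ i) * (1 - x) :=
        mul_le_mul_of_nonneg_right hbound h1x
    _ = 1 - x ^ n := by rw [hsum]; ring

/-- For `θ ∈ [0, π/2]` and a positive integer `p`, `arccos((cos θ)^p) ≤ √p · θ`. -/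
theorem arccos_cos_pow_le (θ : ℝ) (hθ0 : 0 ≤ θ) (hθ : θ ≤ Real.pi / 2)
    (p : ℕ) (hp : 0 < p) :
    Real.arccos ((Real.cos θ) ^ p) ≤ Real.sqrt p * θ := by
  have hp1 : (1 : ℝ) ≤ (p : ℝ) := by exact_mod_cast hp
  set f : ℝ → ℝ := fun x => Real.sqrt p * x - Real.arccos (Real.cos x ^ p) with hf
  -- derivative of f on the interior
  have hder : ∀ x ∈ Ioo (0 : ℝ) (π / 2),
      HasDerivAt f (Real.sqrt p -
        (p : ℝ) * Real.cos x ^ (p - 1) * Real.sin x / Real.sqrt (1 - (Real.cos x ^ p) ^ 2)) x := by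
    intro x hx
    have hc0 : 0 < Real.cos x := Real.cos_pos_of_mem_Ioo ⟨by linarith [hx.1, pi_pos], hx.2⟩
    have hc1 : Real.cos x < 1 := by
      have := Real.cos_lt_cos_of_nonneg_of_le_pi (le_refl 0) (by linarith [pi_pos, hx.2]) hx.1
      simpa using this
    have hcp0 : 0 < Real.cos x ^ p := pow_pos hc0 p
    have hcp1 : Real.cos x ^ p < 1 := pow_lt_one₀ hc0.le hc1 hp.ne'
    have hne1 : Real.cos x ^ p ≠ 1 := ne_of_lt hcp1
    have hnem1 : Real.cos x ^ p ≠ -1 := by linarith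
    have hg : HasDerivAt (fun y => Real.cos y ^ p)
        ((p : ℝ) * Real.cos x ^ (p - 1) * (-Real.sin x)) x :=
      (Real.hasDerivAt_cos x).pow p
    have harc := Real.hasDerivAt_arccos hnem1 hne1
    have hcomp := harc.comp x hg
    have hlin : HasDerivAt (fun y => Real.sqrt p * y) (Real.sqrt p * 1) x :=
      (hasDerivAt_id x).const_mul _
    have := hlin.sub hcomp
    refine this.congr_deriv ?_
    ring
  have hmono : MonotoneOn f (Icc 0 (π / 2)) := by
    apply monotoneOn_of_deriv_nonneg (convex_Icc _ _)
    · exact ((continuous_const.mul continuous_id).sub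
        (Real.continuous_arccos.comp (Real.continuous_cos.pow p))).continuousOn
    · rw [interior_Icc]
      exact fun x hx => ((hder x hx).differentiableAt).differentiableWithinAt
    · rw [interior_Icc]
      intro x hx
      rw [(hder x hx).deriv]
      have hc0 : 0 < Real.cos x := Real.cos_pos_of_mem_Ioo ⟨by linarith [hx.1, pi_pos], hx.2⟩
      have hc1 : Real.cos x < 1 := by
        have := Real.cos_lt_cos_of_nonneg_of_le_pi (le_refl 0) (by linarith [pi_pos, hx.2]) hx.1
        simpa using this
      have hcp1 : Real.cos x ^ p < 1 := pow_lt_one₀ hc0.le hc1 hp.ne'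
      have hcp0 : 0 < Real.cos x ^ p := pow_pos hc0 p
      have hS : 0 < Real.sqrt (1 - (Real.cos x ^ p) ^ 2) := by
        apply Real.sqrt_pos.mpr
        nlinarith
      have hs0 : 0 ≤ Real.sin x := Real.sin_nonneg_of_nonneg_of_le_pi hx.1.le
        (by linarith [pi_pos, hx.2])
      rw [sub_nonneg, div_le_iff₀ hS]
      -- reduce to squared inequality
      have hA0 : 0 ≤ (p : ℝ) * Real.cos x ^ (p - 1) * Real.sin x :=
        mul_nonneg (mul_nonneg (by positivity) (by positivity)) hs0
      have hgoal2 : ((p : ℝ) * Real.cos x ^ (p - 1) * Real.sin x) ^ 2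
          ≤ (p : ℝ) * (1 - (Real.cos x ^ p) ^ 2) := by
        have hkey := geom_aux (sq_nonneg (Real.cos x)) (by nlinarith) p
        have e1 : (Real.cos x ^ (p - 1)) ^ 2 = (Real.cos x ^ 2) ^ (p - 1) := by
          rw [← pow_mul, ← pow_mul, Nat.mul_comm]
        have e2 : (Real.cos x ^ p) ^ 2 = (Real.cos x ^ 2) ^ p := by
          rw [← pow_mul, ← pow_mul, Nat.mul_comm]
        have e3 : Real.sin x ^ 2 = 1 - Real.cos x ^ 2 := Real.sin_sq x
        calc ((p : ℝ) * Real.cos x ^ (p - 1) * Real.sin x) ^ 2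
            = (p : ℝ) * ((p : ℝ) * (Real.cos x ^ 2) ^ (p - 1) * (1 - Real.cos x ^ 2)) := by
              rw [mul_pow, mul_pow, e1, e3]; ring
          _ ≤ (p : ℝ) * (1 - (Real.cos x ^ 2) ^ p) :=
              mul_le_mul_of_nonneg_left hkey (by positivity)
          _ = (p : ℝ) * (1 - (Real.cos x ^ p) ^ 2) := by rw [e2]
      calc (p : ℝ) * Real.cos x ^ (p - 1) * Real.sin x
          ≤ Real.sqrt (((p : ℝ) * Real.cos x ^ (p - 1) * Real.sin x) ^ 2) := by
            rw [Real.sqrt_sq hA0]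
        _ ≤ Real.sqrt ((p : ℝ) * (1 - (Real.cos x ^ p) ^ 2)) :=
            Real.sqrt_le_sqrt hgoal2
        _ = Real.sqrt p * Real.sqrt (1 - (Real.cos x ^ p) ^ 2) :=
            Real.sqrt_mul (by positivity) _
  have h0 : f 0 = 0 := by simp [hf]
  have hθmem : θ ∈ Icc (0 : ℝ) (π / 2) := ⟨hθ0, hθ⟩
  have h0mem : (0 : ℝ) ∈ Icc (0 : ℝ) (π / 2) := ⟨le_refl 0, by linarith [pi_pos]⟩
  have := hmono h0mem hθmem hθ0
  rw [h0] at this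
  simpa [hf, sub_nonneg] using this
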